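/- arXiv:2412.13075 — 8 statements merged into one kernel-verified Lean document; each statement's English description precedes it below -/
import Mathlib

section
/- For every integer k, the polynomial f_{1,k}(x) = x^3 - 3(9k^2+3k+1)x + (6k+1)(9k^2+3k+1) is irreducible over Q. -/
open Polynomial

theorem f1k_irreducible (k : ℤ) :
    Irreducible (X ^ 3 - C (3 * (9 * (k : ℚ) ^ 2 + 3 * k + 1)) * X
      + C ((6 * (k : ℚ) + 1) * (9 * (k : ℚ) ^ 2 + 3 * k + 1))) := by
  set g : ℤ[X] := X ^ 3 - C (3 * (9 * k ^ 2 + 3 * k + 1)) * X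
      + C ((6 * k + 1) * (9 * k ^ 2 + 3 * k + 1)) with hg
  have hmon : g.Monic := by
    unfold g
    monicity!
  have hmap2 : g.map (Int.castRingHom (ZMod 2)) = X ^ 3 + X + 1 := by
    have h1 : ((3 * (9 * k ^ 2 + 3 * k + 1) : ℤ) : ZMod 2) = 1 := by
      push_cast
      have : ∀ x : ZMod 2, 3 * (9 * x ^ 2 + 3 * x + 1) = 1 := by decide
      exact this _
    have h2 : (((6 * k + 1) * (9 * k ^ 2 + 3 * k + 1) : ℤ) : ZMod 2) = 1 := by
      push_cast
      have : ∀ x : ZMod 2, (6 * x + 1) * (9 * x ^ 2 + 3 * x + 1) = 1 := by decide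
      exact this _
    unfold g
    simp only [Polynomial.map_add, Polynomial.map_sub, Polynomial.map_mul,
      Polynomial.map_pow, Polynomial.map_X, map_C]
    rw [show ((Int.castRingHom (ZMod 2)) (3 * (9 * k ^ 2 + 3 * k + 1)) : ZMod 2) = 1 from h1,
        show ((Int.castRingHom (ZMod 2)) ((6 * k + 1) * (9 * k ^ 2 + 3 * k + 1)) : ZMod 2) = 1 from h2]
    simp only [map_one]
    ring_nf
    rw [sub_eq_add_neg, CharTwo.neg_eq]
  have hirr2 : Irreducible (g.map (Int.castRingHom (ZMod 2))) := by
    rw [hmap2]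
    rw [irreducible_iff_roots_eq_zero_of_degree_le_three]
    · rw [Multiset.eq_zero_iff_forall_notMem]
      intro a ha
      rw [mem_roots, IsRoot] at ha
      · simp at ha
        revert ha
        revert a; decide
      · intro h
        have := congrArg (fun p => coeff p 0) h
        simp at this
    · have h3 : ((X:(ZMod 2)[X])^3+X+1).natDegree = 3 := by compute_degree!
      omega
    · have h3 : ((X:(ZMod 2)[X])^3+X+1).natDegree = 3 := by compute_degree!
      omega
  have hirrZ : Irreducible g := hmon.irreducible_of_irreducible_map _ _ hirr2
  have := (hmon.irreducible_iff_irreducible_map_fraction_map (K := ℚ)).mp hirrZ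
  have heq : g.map (algebraMap ℤ ℚ) = X ^ 3 - C (3 * (9 * (k : ℚ) ^ 2 + 3 * k + 1)) * X
      + C ((6 * (k : ℚ) + 1) * (9 * (k : ℚ) ^ 2 + 3 * k + 1)) := by
    unfold g
    simp only [Polynomial.map_add, Polynomial.map_sub, Polynomial.map_mul,
      Polynomial.map_pow, Polynomial.map_X, map_C]
    rw [show (algebraMap ℤ ℚ) (3 * (9 * k ^ 2 + 3 * k + 1))
          = 3 * (9 * (k:ℚ) ^ 2 + 3 * k + 1) by simp only [algebraMap_int_eq, eq_intCast]; push_cast; ring,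
        show (algebraMap ℤ ℚ) ((6 * k + 1) * (9 * k ^ 2 + 3 * k + 1))
          = (6 * (k:ℚ) + 1) * (9 * (k:ℚ) ^ 2 + 3 * k + 1) by simp only [algebraMap_int_eq, eq_intCast]; push_cast; ring]
  rwa [heq] at this
end

section
/- For every integer k, the polynomial f_{2,k}(x) = x^3 - (27k^2+27k+7)x + (2k+1)(27k^2+27k+7) is irreducible over Q. -/
open Polynomial

private lemma zmod2_two_poly : (2 : (ZMod 2)[X]) = 0 := by
  rw [← map_ofNat C 2, show (2 : ZMod 2) = 0 from rfl, map_zero]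

private lemma cubic_irred : Irreducible (X ^ 3 + X + 1 : (ZMod 2)[X]) := by
  have hd : (X ^ 3 + X + 1 : (ZMod 2)[X]).natDegree = 3 := by compute_degree!
  rw [irreducible_iff_roots_eq_zero_of_degree_le_three (by omega) (by omega)]
  apply Multiset.eq_zero_of_forall_notMem
  intro a ha
  have h0 : (X ^ 3 + X + 1 : (ZMod 2)[X]) ≠ 0 := fun h => by simp [h] at hd
  rw [mem_roots h0] at ha
  have h1 : a ^ 3 + a + 1 = 0 := by simpa [IsRoot] using ha
  have h' : ∀ b : ZMod 2, b ^ 3 + b + 1 ≠ 0 := by decide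
  exact h' a h1

private lemma f2k_int_irreducible (k : ℤ) :
    Irreducible (X ^ 3 - C (27 * k ^ 2 + 27 * k + 7) * X
      + C ((2 * k + 1) * (27 * k ^ 2 + 27 * k + 7)) : ℤ[X]) := by
  obtain ⟨m, hm⟩ := Int.even_mul_succ_self k
  have hδ : (Int.castRingHom (ZMod 2)) (27 * k ^ 2 + 27 * k + 7) = 1 := by
    have h2 : (2 : ℤ) ∣ (27 * k ^ 2 + 27 * k + 7 - 1) :=
      ⟨27 * m + 3, by linear_combination 27 * hm⟩
    have := (ZMod.intCast_zmod_eq_zero_iff_dvd _ 2).mpr h2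
    rw [eq_intCast]
    push_cast at this ⊢
    linear_combination this
  have hη : (Int.castRingHom (ZMod 2)) ((2 * k + 1) * (27 * k ^ 2 + 27 * k + 7)) = 1 := by
    have h2 : (2 : ℤ) ∣ ((2 * k + 1) * (27 * k ^ 2 + 27 * k + 7) - 1) :=
      ⟨k * (27 * k ^ 2 + 27 * k + 7) + 27 * m + 3, by linear_combination 27 * hm⟩
    have := (ZMod.intCast_zmod_eq_zero_iff_dvd _ 2).mpr h2
    rw [eq_intCast]
    push_cast at this ⊢
    linear_combination this
  apply Monic.irreducible_of_irreducible_map (Int.castRingHom (ZMod 2))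
  · monicity!
  · have hmap : ((X ^ 3 - C (27 * k ^ 2 + 27 * k + 7) * X
        + C ((2 * k + 1) * (27 * k ^ 2 + 27 * k + 7)) : ℤ[X]).map
          (Int.castRingHom (ZMod 2))) = X ^ 3 + X + 1 := by
      simp only [Polynomial.map_add, Polynomial.map_sub, Polynomial.map_mul,
        Polynomial.map_pow, map_X, map_C]
      rw [hδ, hη, map_one]
      linear_combination -X * zmod2_two_poly
    rw [hmap]
    exact cubic_irred

theorem f2k_irreducible (k : ℤ) :
    Irreducible (X ^ 3 - C (27 * (k : ℚ) ^ 2 + 27 * k + 7) * X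
      + C ((2 * (k : ℚ) + 1) * (27 * (k : ℚ) ^ 2 + 27 * k + 7))) := by
  have hm : (X ^ 3 - C (27 * k ^ 2 + 27 * k + 7) * X
      + C ((2 * k + 1) * (27 * k ^ 2 + 27 * k + 7)) : ℤ[X]).Monic := by monicity!
  have h := (IsPrimitive.Int.irreducible_iff_irreducible_map_cast hm.isPrimitive).mp
    (f2k_int_irreducible k)
  have hmap : ((X ^ 3 - C (27 * k ^ 2 + 27 * k + 7) * X
      + C ((2 * k + 1) * (27 * k ^ 2 + 27 * k + 7)) : ℤ[X]).map (Int.castRingHom ℚ))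
      = X ^ 3 - C (27 * (k : ℚ) ^ 2 + 27 * k + 7) * X
      + C ((2 * (k : ℚ) + 1) * (27 * (k : ℚ) ^ 2 + 27 * k + 7)) := by
    simp only [Polynomial.map_add, Polynomial.map_sub, Polynomial.map_mul,
      Polynomial.map_pow, map_X, map_C]
    simp only [eq_intCast]
    push_cast
    ring
  rwa [hmap] at h
end

section
/- For every integer k, the discriminant of f_{1,k}(x) = x^3 - 3δ_1 x + (6k+1)δ_1, where δ_1 = 9k^2 + 3k + 1, equals 3^4 · δ_1^2; in particular it is a perfect square. -/
open Polynomial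

theorem disc_f1k (k : ℤ) (r₁ r₂ r₃ : ℂ)
    (h : (X ^ 3 - C ((3 * (9 * k ^ 2 + 3 * k + 1) : ℤ) : ℂ) * X
        + C (((6 * k + 1) * (9 * k ^ 2 + 3 * k + 1) : ℤ) : ℂ)) =
      (X - C r₁) * (X - C r₂) * (X - C r₃)) :
    ((r₁ - r₂) * (r₁ - r₃) * (r₂ - r₃)) ^ 2
      = ((3 ^ 4 * (9 * k ^ 2 + 3 * k + 1) ^ 2 : ℤ) : ℂ)
    ∧ ∃ n : ℤ, (3 ^ 4 * (9 * k ^ 2 + 3 * k + 1) ^ 2 : ℤ) = n ^ 2 := by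
  have h' : (X - C r₁) * (X - C r₂) * (X - C r₃)
      = X ^ 3 - C (r₁ + r₂ + r₃) * X ^ 2 + C (r₁ * r₂ + r₁ * r₃ + r₂ * r₃) * X
        - C (r₁ * r₂ * r₃) := by
    simp only [map_add, map_mul]
    ring
  rw [h'] at h
  have h2 := congrArg (fun p => p.coeff 2) h
  have h1 := congrArg (fun p => p.coeff 1) h
  have h0 := congrArg (fun p => p.coeff 0) h
  simp only [coeff_add, coeff_sub, coeff_X_pow, coeff_C_mul, coeff_X, coeff_C] at h2 h1 h0
  norm_num at h2 h1 h0
  push_cast at h0 h1 h2 ⊢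
  constructor
  · linear_combination
      ((r₁+r₂+r₃) * (r₁*r₂+r₁*r₃+r₂*r₃)^2 - 4*(r₁+r₂+r₃)^2*(r₁*r₂*r₃)
        + 18*(r₁*r₂+r₁*r₃+r₂*r₃)*(r₁*r₂*r₃)) * h2
      + (4) * ((r₁*r₂+r₁*r₃+r₂*r₃)^2
          + (r₁*r₂+r₁*r₃+r₂*r₃)*(-(3*(9*(k:ℂ)^2+3*k+1)))
          + (-(3*(9*(k:ℂ)^2+3*k+1)))^2) * h1
      + (-27) * (r₁*r₂*r₃ + (-((6*(k:ℂ)+1)*(9*k^2+3*k+1)))) * h0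
  · exact ⟨9 * (9 * k ^ 2 + 3 * k + 1), by ring⟩
end

section
/- For every integer k, the discriminant of f_{2,k}(x) = x^3 - δ_2 x + (2k+1)δ_2, where δ_2 = 27k^2 + 27k + 7, equals δ_2^2; in particular it is a perfect square. -/
open Polynomial

theorem disc_f2k (k : ℤ) (r₁ r₂ r₃ : ℂ)
    (h : (X ^ 3 - C (((27 * k ^ 2 + 27 * k + 7) : ℤ) : ℂ) * X
        + C (((2 * k + 1) * (27 * k ^ 2 + 27 * k + 7) : ℤ) : ℂ)) =
      (X - C r₁) * (X - C r₂) * (X - C r₃)) :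
    ((r₁ - r₂) * (r₁ - r₃) * (r₂ - r₃)) ^ 2
      = (((27 * k ^ 2 + 27 * k + 7) ^ 2 : ℤ) : ℂ)
    ∧ ∃ n : ℤ, ((27 * k ^ 2 + 27 * k + 7) ^ 2 : ℤ) = n ^ 2 := by
  have h2 := congrArg (fun p => Polynomial.coeff p 2) h
  have h1 := congrArg (fun p => Polynomial.coeff p 1) h
  have h0 := congrArg (fun p => Polynomial.coeff p 0) h
  ring_nf at h2 h1 h0
  simp only [coeff_add, coeff_sub, coeff_neg, coeff_mul_C, coeff_C_mul, coeff_mul_X,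
    coeff_X_mul, coeff_X_pow, coeff_X, coeff_C] at h2 h1 h0
  norm_num at h2 h1 h0
  constructor
  · push_cast at h0 h1 h2 ⊢
    linear_combination
      ((r₁+r₂+r₃)*(r₁*r₂+r₁*r₃+r₂*r₃)^2 - 4*(r₁+r₂+r₃)^2*(r₁*r₂*r₃)
        + 18*(r₁*r₂+r₁*r₃+r₂*r₃)*(r₁*r₂*r₃)) * h2
      + 4*((r₁*r₂+r₁*r₃+r₂*r₃)^2 - (r₁*r₂+r₁*r₃+r₂*r₃)*(27*(k:ℂ)^2+27*k+7)
        + (27*(k:ℂ)^2+27*k+7)^2) * h1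
      + (-27)*(r₁*r₂*r₃ - (2*(k:ℂ)+1)*(27*(k:ℂ)^2+27*k+7)) * h0
  · exact ⟨27 * k ^ 2 + 27 * k + 7, rfl⟩
end

section
/- For every integer k, the Galois group over Q of f_{1,k}(x) = x^3 - 3δ_1 x + (6k+1)δ_1, where δ_1 = 9k^2 + 3k + 1, is cyclic of order 3. -/
open Polynomial

lemma f1k_aux {L : Type*} [Field L] (t α : L)
    (hroot : α ^ 3 - 3 * (9 * t ^ 2 + 3 * t + 1) * α
      + (6 * t + 1) * (9 * t ^ 2 + 3 * t + 1) = 0) :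
    ∃ β γ : L, α + β + γ = 0 ∧
      α * β + α * γ + β * γ = -(3 * (9 * t ^ 2 + 3 * t + 1)) ∧
      α * β * γ = -((6 * t + 1) * (9 * t ^ 2 + 3 * t + 1)) := by
  refine ⟨α ^ 2 + 3 * t * α - (18 * t ^ 2 + 6 * t + 2),
    -α - (α ^ 2 + 3 * t * α - (18 * t ^ 2 + 6 * t + 2)), by ring, ?_, ?_⟩
  · linear_combination (-α - (6 * t + 1)) * hroot
  · linear_combination (-(α ^ 2 + (6 * t + 1) * α - 1)) * hroot

theorem f1k_gal_cyclic_three (k : ℤ) :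
    IsCyclic (X ^ 3 - C (3 * (9 * (k : ℚ) ^ 2 + 3 * k + 1)) * X
      + C ((6 * (k : ℚ) + 1) * (9 * (k : ℚ) ^ 2 + 3 * k + 1))).Gal
    ∧ Nat.card (X ^ 3 - C (3 * (9 * (k : ℚ) ^ 2 + 3 * k + 1)) * X
      + C ((6 * (k : ℚ) + 1) * (9 * (k : ℚ) ^ 2 + 3 * k + 1))).Gal = 3 := by
  set a : ℚ := 3 * (9 * (k : ℚ) ^ 2 + 3 * k + 1) with ha
  set b : ℚ := (6 * (k : ℚ) + 1) * (9 * (k : ℚ) ^ 2 + 3 * k + 1) with hb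
  set f : ℚ[X] := X ^ 3 - C a * X + C b with hf
  have hmonic : f.Monic := by rw [hf]; monicity!
  have hdeg : f.natDegree = 3 := by rw [hf]; compute_degree!
  have hfne : f ≠ 0 := hmonic.ne_zero
  -- irreducibility
  have h9 : ∀ x y : ZMod 9,
      x ^ 3 - 3 * (9 * y ^ 2 + 3 * y + 1) * x + (6 * y + 1) * (9 * y ^ 2 + 3 * y + 1) ≠ 0 := by
    decide
  have hirr : Irreducible f := by
    rw [irreducible_iff_roots_eq_zero_of_degree_le_three (by omega) (by omega)]
    rw [Multiset.eq_zero_iff_forall_notMem]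
    intro r hr
    rw [mem_roots hfne] at hr
    set F : ℤ[X] := X ^ 3 - C (3 * (9 * k ^ 2 + 3 * k + 1)) * X
      + C ((6 * k + 1) * (9 * k ^ 2 + 3 * k + 1)) with hF
    have hFmonic : F.Monic := by rw [hF]; monicity!
    have hFmap : F.map (Int.castRingHom ℚ) = f := by
      have c1 : ((3 * (9 * k ^ 2 + 3 * k + 1) : ℤ) : ℚ)
          = 3 * (9 * (k : ℚ) ^ 2 + 3 * k + 1) := by push_cast; ring
      have c2 : (((6 * k + 1) * (9 * k ^ 2 + 3 * k + 1) : ℤ) : ℚ)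
          = (6 * (k : ℚ) + 1) * (9 * (k : ℚ) ^ 2 + 3 * k + 1) := by push_cast; ring
      rw [hF, hf, ha, hb]
      simp only [Polynomial.map_add, Polynomial.map_sub, Polynomial.map_mul,
        Polynomial.map_pow, map_X, map_C, Int.coe_castRingHom, c1, c2]
    have hroot' : aeval r F = 0 := by
      rw [aeval_def, ← eval_map]
      show (F.map (algebraMap ℤ ℚ)).eval r = 0
      rw [show (algebraMap ℤ ℚ) = Int.castRingHom ℚ from rfl, hFmap]
      exact hr
    have hint : IsIntegral ℤ r := ⟨F, hFmonic, by rwa [← aeval_def]⟩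
    obtain ⟨n, hn⟩ := IsIntegrallyClosed.isIntegral_iff.mp hint
    have he : r ^ 3 - a * r + b = 0 := by
      have := hr
      rw [hf] at this
      simpa [IsRoot] using this
    rw [← hn] at he
    rw [ha, hb] at he
    have hn' : (algebraMap ℤ ℚ) n = (n : ℚ) := by simp
    rw [hn'] at he
    have hz : (n ^ 3 - 3 * (9 * k ^ 2 + 3 * k + 1) * n
        + (6 * k + 1) * (9 * k ^ 2 + 3 * k + 1) : ℤ) = 0 := by
      exact_mod_cast he
    have := congrArg (Int.cast : ℤ → ZMod 9) hz
    push_cast at this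
    exact h9 (n : ZMod 9) (k : ZMod 9) this
  haveI : Fact (Irreducible f) := ⟨hirr⟩
  -- the adjoin-root field
  have h0 : aeval (AdjoinRoot.root f) (X ^ 3 - C a * X + C b) = 0 :=
    show aeval (AdjoinRoot.root f) f = 0 by
      rw [aeval_def]; exact AdjoinRoot.eval₂_root f
  have hroot : (AdjoinRoot.root f) ^ 3
      - 3 * (9 * (algebraMap ℚ (AdjoinRoot f) (k : ℚ)) ^ 2
          + 3 * (algebraMap ℚ (AdjoinRoot f) (k : ℚ)) + 1) * (AdjoinRoot.root f)
      + (6 * (algebraMap ℚ (AdjoinRoot f) (k : ℚ)) + 1)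
        * (9 * (algebraMap ℚ (AdjoinRoot f) (k : ℚ)) ^ 2
          + 3 * (algebraMap ℚ (AdjoinRoot f) (k : ℚ)) + 1) = 0 := by
    rw [ha, hb] at h0
    simp only [map_sub, map_add, map_mul, map_pow, aeval_X, aeval_C, map_ofNat, map_one] at h0
    linear_combination h0
  obtain ⟨β, γ, h1, h2, h3⟩ := f1k_aux _ _ hroot
  have hia : algebraMap ℚ (AdjoinRoot f) a
      = 3 * (9 * (algebraMap ℚ (AdjoinRoot f) (k : ℚ)) ^ 2
          + 3 * (algebraMap ℚ (AdjoinRoot f) (k : ℚ)) + 1) := by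
    rw [ha]; simp only [map_mul, map_add, map_pow, map_ofNat, map_one]
  have hib : algebraMap ℚ (AdjoinRoot f) b
      = (6 * (algebraMap ℚ (AdjoinRoot f) (k : ℚ)) + 1)
        * (9 * (algebraMap ℚ (AdjoinRoot f) (k : ℚ)) ^ 2
          + 3 * (algebraMap ℚ (AdjoinRoot f) (k : ℚ)) + 1) := by
    rw [hb]; simp only [map_mul, map_add, map_pow, map_ofNat, map_one]
  rw [← hia] at h2
  rw [← hib] at h3
  have hsplits : Splits (f.map (algebraMap ℚ (AdjoinRoot f))) := by
    show Splits ((X ^ 3 - C a * X + C b).map (algebraMap ℚ (AdjoinRoot f)))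
    have expand : (X - C (AdjoinRoot.root f)) * (X - C β) * (X - C γ)
        = X ^ 3 - C (AdjoinRoot.root f + β + γ) * X ^ 2
          + C ((AdjoinRoot.root f) * β + (AdjoinRoot.root f) * γ + β * γ) * X
          - C ((AdjoinRoot.root f) * β * γ) := by
      simp only [C_add, C_mul]; ring
    have hfactor : (X ^ 3 - C a * X + C b).map (algebraMap ℚ (AdjoinRoot f))
        = (X - C (AdjoinRoot.root f)) * (X - C β) * (X - C γ) := by
      rw [expand, h1, h2, h3, ha, hb]
      simp only [Polynomial.map_add, Polynomial.map_sub, Polynomial.map_mul,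
        Polynomial.map_pow, map_X, map_C, C_neg, C_0]
      ring
    rw [hfactor]
    exact ((Splits.X_sub_C _).mul (Splits.X_sub_C _)).mul (Splits.X_sub_C _)
  haveI : FiniteDimensional ℚ (AdjoinRoot f) := (AdjoinRoot.powerBasis hfne).finite
  have hLrank : Module.finrank ℚ (AdjoinRoot f) = 3 := by
    rw [(AdjoinRoot.powerBasis hfne).finrank, AdjoinRoot.powerBasis_dim, hdeg]
  have hSF : Module.finrank ℚ f.SplittingField = 3 := by
    have g1 : f.SplittingField →ₐ[ℚ] AdjoinRoot f := SplittingField.lift f hsplits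
    have le1 : Module.finrank ℚ f.SplittingField ≤ Module.finrank ℚ (AdjoinRoot f) :=
      LinearMap.finrank_le_finrank_of_injective (f := g1.toLinearMap) g1.injective
    obtain ⟨y, hy⟩ := Splits.exists_eval_eq_zero
      (SplittingField.splits f) (by
        rw [degree_map, degree_eq_natDegree hfne, hdeg]; norm_num)
    have g2 : AdjoinRoot f →ₐ[ℚ] f.SplittingField := AdjoinRoot.liftAlgHom f (Algebra.ofId ℚ _) y ((eval₂_eq_eval_map _).trans hy)
    have le2 : Module.finrank ℚ (AdjoinRoot f) ≤ Module.finrank ℚ f.SplittingField :=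
      LinearMap.finrank_le_finrank_of_injective (f := g2.toLinearMap) g2.injective
    omega
  have hcard : Nat.card f.Gal = 3 := by
    rw [Gal.card_of_separable hirr.separable, hSF]
  refine ⟨?_, hcard⟩
  haveI : Fact (Nat.Prime 3) := ⟨by norm_num⟩
  exact isCyclic_of_prime_card hcard
end

section
/- There do not exist integers k and m such that the trinomials x^3 - 3(9k^2+3k+1)x + (6k+1)(9k^2+3k+1) and x^3 - (27m^2+27m+7)x + (2m+1)(27m^2+27m+7) are equal as polynomials. -/
open Polynomial

theorem F1_inter_F2_empty :
    ¬ ∃ k m : ℤ,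
      (X ^ 3 - C (3 * (9 * k ^ 2 + 3 * k + 1)) * X
        + C ((6 * k + 1) * (9 * k ^ 2 + 3 * k + 1)) : Polynomial ℤ)
      = X ^ 3 - C (27 * m ^ 2 + 27 * m + 7) * X
        + C ((2 * m + 1) * (27 * m ^ 2 + 27 * m + 7)) := by
  rintro ⟨k, m, h⟩
  have h1 := congrArg (fun p => Polynomial.coeff p 1) h
  simp only [coeff_add, coeff_sub, coeff_C_mul, coeff_X_pow, coeff_X_one, coeff_C] at h1
  norm_num at h1
  generalize k ^ 2 = a at h1
  generalize m ^ 2 = b at h1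
  omega
end

section
/- There exist infinitely many integers k such that 9k^2 + 3k + 1 is squarefree, and infinitely many integers k ≥ 0 such that 27k^2 + 27k + 7 is squarefree. -/
open Finset

def Sol (b c M q : ℕ) : Finset ℕ :=
  (Finset.range M).filter (fun k => q ∣ (18*k+b)^2 + c)

lemma dich {b c p : ℕ} (hp : p.Prime) (hp5 : 5 ≤ p) (hc : c ∣ 27)
    {r s : ℕ} (hr : (p:ℤ)^2 ∣ (18*r+b)^2 + c) (hs : (p:ℤ)^2 ∣ (18*s+b)^2 + c) :
    (p:ℤ)^2 ∣ (18*r+b) - (18*s+b) ∨ (p:ℤ)^2 ∣ ((18*r+b) + (18*s+b)) := by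
  have hpZ : Prime (p:ℤ) := Nat.prime_iff_prime_int.mp hp
  have hprod : (p:ℤ)^2 ∣ ((18*r+b) - (18*s+b)) * ((18*r+b) + (18*s+b)) := by
    have := dvd_sub hr hs
    convert this using 1
    exacts [rfl, by ring]
  have hnot : ¬ ((p:ℤ) ∣ (18*r+b) - (18*s+b) ∧ (p:ℤ) ∣ (18*r+b) + (18*s+b)) := by
    rintro ⟨h1, h2⟩
    have h3 : (p:ℤ) ∣ 2*(18*r+b) := by
      have := dvd_add h2 h1
      convert this using 1
      exacts [rfl, by ring]
    have hp2 : ¬ (p:ℤ) ∣ 2 := by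
      intro h
      have := Int.le_of_dvd (by norm_num) h
      omega
    have h4 : (p:ℤ) ∣ (18*r+b) := (hpZ.dvd_mul.mp h3).resolve_left hp2
    have h5 : (p:ℤ) ∣ c := by
      have h6 : (p:ℤ) ∣ (18*r+b)^2 + c := dvd_trans (dvd_pow_self _ two_ne_zero) hr
      have h7 : (p:ℤ) ∣ (18*r+b)^2 := h4.pow two_ne_zero
      exact (dvd_add_right h7).mp h6
    have h8 : (p:ℤ) ∣ 27 := h5.trans (Int.natCast_dvd_natCast.mpr hc)
    have h9 : (p:ℕ) ∣ 27 := by exact_mod_cast h8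
    have h10 : p ∣ 3 := hp.dvd_of_dvd_pow (n := 3) (by norm_num; exact h9 : p ∣ 3^3)
    have := Nat.le_of_dvd (by norm_num) h10
    omega
  by_cases h1 : (p:ℤ) ∣ (18*r+b) - (18*s+b)
  · left
    have h2 : ¬ (p:ℤ) ∣ (18*r+b) + (18*s+b) := fun h => hnot ⟨h1, h⟩
    exact hpZ.pow_dvd_of_dvd_mul_right 2 h2 hprod
  · right
    exact hpZ.pow_dvd_of_dvd_mul_left 2 h1 hprod

lemma not_dvd_eighteen {p : ℕ} (hp : p.Prime) (hp5 : 5 ≤ p) : ¬ (p:ℤ) ∣ 18 := by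
  intro h
  have h1 : p ∣ 18 := by exact_mod_cast h
  have := Nat.le_of_dvd (by norm_num) h1
  interval_cases p <;> revert h1 hp <;> decide

lemma eq_of_sq_dvd_diff {p : ℕ} (hp : p.Prime) (hp5 : 5 ≤ p) {x y : ℤ}
    (h : (p:ℤ)^2 ∣ 18*x - 18*y) (hsize : |x - y| < (p:ℤ)^2) : x = y := by
  have hpZ : Prime (p:ℤ) := Nat.prime_iff_prime_int.mp hp
  have h2 : (p:ℤ)^2 ∣ 18 * (x - y) := by
    convert h using 1; ring
  have h3 : (p:ℤ)^2 ∣ (x - y) :=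
    hpZ.pow_dvd_of_dvd_mul_left 2 (not_dvd_eighteen hp hp5) h2
  have := Int.eq_zero_of_abs_lt_dvd h3 hsize
  omega

lemma nat_eq_of_dvd {b p u v : ℕ} (hp : p.Prime) (hp5 : 5 ≤ p) (hu : u < p^2) (hv : v < p^2)
    (h : (p:ℤ)^2 ∣ (18*(u:ℤ)+b) - (18*(v:ℤ)+b)) : u = v := by
  have h' : (p:ℤ)^2 ∣ 18*(u:ℤ) - 18*(v:ℤ) := by convert h using 1; ring
  have hu' : (u:ℤ) < (p:ℤ)^2 := by exact_mod_cast hu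
  have hv' : (v:ℤ) < (p:ℤ)^2 := by exact_mod_cast hv
  have := eq_of_sq_dvd_diff hp hp5 h' (by rw [abs_sub_lt_iff]; omega)
  exact_mod_cast this

lemma mem_sol_mod {b c q k : ℕ} (hq : 0 < q) (hk : q ∣ (18*k+b)^2 + c) :
    q ∣ (18*(k % q)+b)^2 + c := by
  have h1 : k % q ≡ k [MOD q] := Nat.mod_modEq k q
  have h2 : (18*(k % q)+b)^2 + c ≡ (18*k+b)^2 + c [MOD q] :=
    (((h1.mul_left 18).add_right b).pow 2).add_right c
  exact Nat.modEq_zero_iff_dvd.mp (h2.trans (Nat.modEq_zero_iff_dvd.mpr hk))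

lemma cast_dvd_sol {b c p : ℕ} {w : ℕ} (hw : p^2 ∣ (18*w+b)^2 + c) :
    (p:ℤ)^2 ∣ (18*(w:ℤ)+b)^2 + c := by
  have := Int.natCast_dvd_natCast.mpr hw
  push_cast at this
  convert this using 2 <;> push_cast <;> ring

lemma card_residues_le_two {b c p : ℕ} (hp : p.Prime) (hp5 : 5 ≤ p) (hc : c ∣ 27) :
    ((Finset.range (p^2)).filter (fun r => p^2 ∣ (18*r+b)^2 + c)).card ≤ 2 := by
  by_contra hcard
  push_neg at hcard
  obtain ⟨x, hx, y, hy, z, hz, hxy, hxz, hyz⟩ := Finset.two_lt_card.mp hcard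
  simp only [Finset.mem_filter, Finset.mem_range] at hx hy hz
  have sum_case : ∀ {u v : ℕ}, u < p^2 → v < p^2 → u ≠ v →
      p^2 ∣ (18*u+b)^2 + c → p^2 ∣ (18*v+b)^2 + c →
      (p:ℤ)^2 ∣ ((18*(u:ℤ)+b) + (18*(v:ℤ)+b)) := by
    intro u v hu hv huv hdu hdv
    rcases dich hp hp5 hc (cast_dvd_sol hdu) (cast_dvd_sol hdv) with h | h
    · exact absurd (nat_eq_of_dvd hp hp5 hu hv h) huv
    · exact h
  have h1 := sum_case hx.1 hy.1 hxy hx.2 hy.2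
  have h2 := sum_case hx.1 hz.1 hxz hx.2 hz.2
  have h3 : (p:ℤ)^2 ∣ (18*(y:ℤ)+b) - (18*(z:ℤ)+b) := by
    have := dvd_sub h1 h2
    convert this using 1; exacts [rfl, by ring]
  exact hyz (nat_eq_of_dvd hp hp5 hy.1 hz.1 h3)

lemma card_sol_le {b c M p : ℕ} (hp : p.Prime) (hp5 : 5 ≤ p) (hc : c ∣ 27) :
    (Sol b c M (p^2)).card ≤ 2 * (M / p^2) + 2 := by
  classical
  have hq : 0 < p^2 := pow_pos hp.pos 2
  set R := (Finset.range (p^2)).filter (fun r => p^2 ∣ (18*r+b)^2 + c) with hR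
  have key : (Sol b c M (p^2)).card ≤ (R ×ˢ Finset.range (M / p^2 + 1)).card := by
    apply Finset.card_le_card_of_injOn (fun k => (k % p^2, k / p^2))
    · intro k hk
      simp only [Finset.mem_coe, Sol, Finset.mem_filter, Finset.mem_range] at hk
      simp only [Finset.mem_coe, Finset.mem_product, hR, Finset.mem_filter, Finset.mem_range]
      refine ⟨⟨Nat.mod_lt _ hq, mem_sol_mod hq hk.2⟩, ?_⟩
      have : k / p^2 ≤ M / p^2 := Nat.div_le_div_right (le_of_lt hk.1)
      omega
    · intro u _ v _ huv
      simp only [Prod.mk.injEq] at huv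
      calc u = p^2 * (u / p^2) + u % p^2 := (Nat.div_add_mod u (p^2)).symm
        _ = p^2 * (v / p^2) + v % p^2 := by rw [huv.1, huv.2]
        _ = v := Nat.div_add_mod v (p^2)
  rw [Finset.card_product, Finset.card_range] at key
  calc (Sol b c M (p^2)).card ≤ R.card * (M / p^2 + 1) := key
    _ ≤ 2 * (M / p^2 + 1) := Nat.mul_le_mul_right _ (card_residues_le_two hp hp5 hc)
    _ = 2 * (M / p^2) + 2 := by ring

lemma card_sol_le_one {b c M p : ℕ} (hp : p.Prime) (hp5 : 5 ≤ p) (hc : c ∣ 27)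
    (hb : 0 < b) (hM : 18*M + b < p^2) :
    (Sol b c M (p^2)).card ≤ 1 := by
  rw [Finset.card_le_one]
  intro u hu v hv
  simp only [Sol, Finset.mem_filter, Finset.mem_range] at hu hv
  have hMp : M ≤ p^2 := by nlinarith
  rcases dich hp hp5 hc (cast_dvd_sol hu.2) (cast_dvd_sol hv.2) with h | h
  · exact nat_eq_of_dvd hp hp5 (lt_of_lt_of_le hu.1 hMp) (lt_of_lt_of_le hv.1 hMp) h
  · exfalso
    have hpZ : Prime (p:ℤ) := Nat.prime_iff_prime_int.mp hp
    have h2 : (p:ℤ)^2 ∣ 2 * (9*(u:ℤ) + 9*(v:ℤ) + b) := by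
      convert h using 1; push_cast; ring
    have hp2 : ¬ (p:ℤ) ∣ 2 := by
      intro hd
      have h6 := Int.le_of_dvd (by norm_num) hd
      have : (5:ℤ) ≤ p := by exact_mod_cast hp5
      omega
    have h3 : (p:ℤ)^2 ∣ (9*(u:ℤ) + 9*(v:ℤ) + b) := hpZ.pow_dvd_of_dvd_mul_left 2 hp2 h2
    have h4 : (0:ℤ) < 9*(u:ℤ) + 9*(v:ℤ) + b := by positivity
    have h5 := Int.le_of_dvd h4 h3
    have h1 := hu.1
    have h2' := hv.1
    have hu' : (u:ℤ) < M := by exact_mod_cast h1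
    have hv' : (v:ℤ) < M := by exact_mod_cast h2'
    have hM' : 18*(M:ℤ) + b < (p:ℤ)^2 := by exact_mod_cast hM
    have hb' : (0:ℤ) < b := by exact_mod_cast hb
    omega


lemma totQ : Nat.totient 614889782588491410 = 85287729364992000 := by
  rw [show (614889782588491410 : ℕ) = 2 * 307444891294245705 by norm_num, Nat.totient_mul (by norm_num), Nat.totient_prime (by norm_num)]
  rw [show (307444891294245705 : ℕ) = 3 * 102481630431415235 by norm_num, Nat.totient_mul (by norm_num), Nat.totient_prime (by norm_num)]
  rw [show (102481630431415235 : ℕ) = 5 * 20496326086283047 by norm_num, Nat.totient_mul (by norm_num), Nat.totient_prime (by norm_num)]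
  rw [show (20496326086283047 : ℕ) = 7 * 2928046583754721 by norm_num, Nat.totient_mul (by norm_num), Nat.totient_prime (by norm_num)]
  rw [show (2928046583754721 : ℕ) = 11 * 266186053068611 by norm_num, Nat.totient_mul (by norm_num), Nat.totient_prime (by norm_num)]
  rw [show (266186053068611 : ℕ) = 13 * 20475850236047 by norm_num, Nat.totient_mul (by norm_num), Nat.totient_prime (by norm_num)]
  rw [show (20475850236047 : ℕ) = 17 * 1204461778591 by norm_num, Nat.totient_mul (by norm_num), Nat.totient_prime (by norm_num)]
  rw [show (1204461778591 : ℕ) = 19 * 63392725189 by norm_num, Nat.totient_mul (by norm_num), Nat.totient_prime (by norm_num)]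
  rw [show (63392725189 : ℕ) = 23 * 2756205443 by norm_num, Nat.totient_mul (by norm_num), Nat.totient_prime (by norm_num)]
  rw [show (2756205443 : ℕ) = 29 * 95041567 by norm_num, Nat.totient_mul (by norm_num), Nat.totient_prime (by norm_num)]
  rw [show (95041567 : ℕ) = 31 * 3065857 by norm_num, Nat.totient_mul (by norm_num), Nat.totient_prime (by norm_num)]
  rw [show (3065857 : ℕ) = 37 * 82861 by norm_num, Nat.totient_mul (by norm_num), Nat.totient_prime (by norm_num)]
  rw [show (82861 : ℕ) = 41 * 2021 by norm_num, Nat.totient_mul (by norm_num), Nat.totient_prime (by norm_num)]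
  rw [show (2021 : ℕ) = 43 * 47 by norm_num, Nat.totient_mul (by norm_num), Nat.totient_prime (by norm_num)]
  rw [Nat.totient_prime (by norm_num)]

lemma sum_Ico_inv_sq_le_aux (m : ℕ) (hm : 2 ≤ m) {B : ℕ} (hB : m ≤ B) :
    ∑ n ∈ Finset.Ico m B, (1:ℚ)/(n^2) ≤ 1/((m:ℚ)-1) - 1/((B:ℚ)-1) := by
  induction B, hB using Nat.le_induction with
  | base => simp
  | succ B hmB ih =>
      rw [Finset.sum_Ico_succ_top hmB]
      have h2 : (2:ℚ) ≤ (B:ℚ) := by exact_mod_cast hm.trans hmB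
      have key : 1/((B:ℚ))^2 ≤ 1/((B:ℚ)-1) - 1/(B:ℚ) := by
        have hB0 : (0:ℚ) < (B:ℚ) := by linarith
        have hB1 : (0:ℚ) < (B:ℚ)-1 := by linarith
        rw [div_sub_div _ _ (ne_of_gt hB1) (ne_of_gt hB0), div_le_div_iff₀ (by positivity) (by positivity)]
        nlinarith
      have : ((B:ℚ)+1) - 1 = (B:ℚ) := by ring
      push_cast
      rw [this]
      linarith

lemma sum_Ico_inv_sq_le (m B : ℕ) (hm : 2 ≤ m) :
    ∑ n ∈ Finset.Ico m B, (1:ℚ)/(n^2) ≤ 1/((m:ℚ)-1) := by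
  rcases le_or_gt m B with h | h
  · have := sum_Ico_inv_sq_le_aux m hm h
    have hB : (2:ℚ) ≤ (B:ℚ) := by
      have h2 : 2 ≤ B := le_trans hm h
      exact_mod_cast h2
    have : 0 ≤ 1/((B:ℚ)-1) := by
      apply div_nonneg (by norm_num)
      linarith
    linarith [sum_Ico_inv_sq_le_aux m hm h]
  · rw [Finset.Ico_eq_empty (by omega), Finset.sum_empty]
    have hm' : (2:ℚ) ≤ (m:ℚ) := by exact_mod_cast hm
    apply div_nonneg (by norm_num)
    linarith

def smallPrimes : Finset ℕ := {5,7,11,13,17,19,23,29,31,37,41,43,47,53,59}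

lemma small_filter (B : ℕ) :
    (((Finset.range B).filter (fun p => p.Prime ∧ 5 ≤ p)).filter (fun p => p < 60)) ⊆ smallPrimes := by
  intro p hp
  simp only [Finset.mem_filter, Finset.mem_range] at hp
  obtain ⟨⟨-, hprime, h5⟩, h60⟩ := hp
  interval_cases p <;> first
    | (exfalso; revert hprime; decide)
    | decide

set_option maxHeartbeats 1000000 in
lemma sum_smallPrimes : ∑ p ∈ smallPrimes, (1:ℚ)/(p^2) ≤ 1049/10000 - 1/59 := by
  have h : smallPrimes = {5,7,11,13,17,19,23,29,31,37,41,43,47,53,59} := rfl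
  rw [h]
  repeat rw [Finset.sum_insert (by decide)]
  rw [Finset.sum_singleton]
  norm_num

lemma pi'_le_self (n : ℕ) : n.primeCounting' ≤ n := by
  rw [← Nat.primesBelow_card_eq_primeCounting']
  refine le_trans (Finset.card_le_card ?_) (le_of_eq (Finset.card_range n))
  intro p hp
  exact Finset.mem_range.mpr (Nat.lt_of_mem_primesBelow hp)

lemma pi'_le {B : ℕ} (hB : 614889782588491410 + 1 ≤ B) :
    B.primeCounting' ≤ (614889782588491410+1) + 85287729364992000 * (B / 614889782588491410 + 1) := by
  have h := Nat.primeCounting'_add_le (a := 614889782588491410) (k := 614889782588491410+1)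
    (by norm_num) (by omega) (B - (614889782588491410+1))
  have e : 614889782588491410 + 1 + (B - (614889782588491410+1)) = B := by omega
  rw [e, totQ] at h
  refine le_trans h (add_le_add (pi'_le_self _) (Nat.mul_le_mul_left _ ?_))
  have h2 : (B - (614889782588491410+1)) / 614889782588491410 ≤ B / 614889782588491410 :=
    Nat.div_le_div_right (by omega)
  omega

lemma main_count {b c d : ℕ} (hb : 0 < b) (hc : c ∣ 27) (F : ℕ → ℕ)
    (hF : ∀ k, d * F k = (18*k+b)^2 + c)
    (h2d : ∀ k, ¬ 2 ∣ F k) (h3d : ∀ k, ¬ 3 ∣ F k)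
    (M B : ℕ) (hB60 : 60 ≤ B)
    (hBcov : ∀ k, k < M → ∀ p, p * p ∣ F k → p < B) :
    (((Finset.range M).filter (fun k => ¬ Squarefree (F k))).card : ℚ)
      ≤ 2*(M:ℚ)*(1049/10000) + 2*((Nat.sqrt (18*M+b) : ℚ) + 1) + (Nat.primeCounting' B : ℚ) := by
  classical
  set P := (Finset.range B).filter (fun p => p.Prime ∧ 5 ≤ p) with hP
  set T := 18*M + b with hT
  set Ps := P.filter (fun p => p^2 ≤ T) with hPs
  set Pl := P.filter (fun p => ¬ p^2 ≤ T) with hPl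
  -- memberships
  have memP : ∀ p ∈ P, p.Prime ∧ 5 ≤ p := by
    intro p hp
    simp only [hP, Finset.mem_filter, Finset.mem_range] at hp
    exact hp.2
  -- cover
  have cover : (Finset.range M).filter (fun k => ¬ Squarefree (F k))
      ⊆ P.biUnion (fun p => Sol b c M (p^2)) := by
    intro k hk
    simp only [Finset.mem_filter, Finset.mem_range] at hk
    obtain ⟨hkM, hns⟩ := hk
    have hex : ¬ ∀ x, Prime x → ¬ x*x ∣ F k :=
      fun h => hns (Nat.squarefree_iff_prime_squarefree.mpr (fun x hx => h x hx.prime))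
    push_neg at hex
    obtain ⟨p, hp, hpd⟩ := hex
    have hpN : p.Prime := Nat.prime_iff.mpr hp
    have hp2 : p ≠ 2 := by
      rintro rfl
      exact h2d k (dvd_trans (Dvd.intro 2 rfl) hpd)
    have hp3 : p ≠ 3 := by
      rintro rfl
      exact h3d k (dvd_trans (Dvd.intro 3 rfl) hpd)
    have hp4 : p ≠ 4 := by
      rintro rfl
      norm_num at hpN
    have hp5 : 5 ≤ p := by
      have := hpN.two_le
      omega
    refine Finset.mem_biUnion.mpr ⟨p, ?_, ?_⟩
    · simp only [hP, Finset.mem_filter, Finset.mem_range]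
      exact ⟨hBcov k hkM p hpd, hpN, hp5⟩
    · simp only [Sol, Finset.mem_filter, Finset.mem_range]
      refine ⟨hkM, ?_⟩
      rw [← hF k, pow_two]
      exact hpd.mul_left d
  -- natural number bound
  have hNat : ((Finset.range M).filter (fun k => ¬ Squarefree (F k))).card
      ≤ (∑ p ∈ Ps, (2*(M/p^2)+2)) + Pl.card := by
    refine le_trans (Finset.card_le_card cover) (le_trans Finset.card_biUnion_le ?_)
    rw [← Finset.sum_filter_add_sum_filter_not P (fun p => p^2 ≤ T)
      (fun p => (Sol b c M (p^2)).card)]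
    refine add_le_add ?_ ?_
    · refine Finset.sum_le_sum ?_
      intro p hp
      obtain ⟨hprime, h5⟩ := memP p (Finset.filter_subset _ _ hp)
      exact card_sol_le hprime h5 hc
    · refine le_trans (Finset.sum_le_sum (g := fun _ => 1) ?_) ?_
      · intro p hp
        have hmem := Finset.mem_filter.mp hp
        obtain ⟨hprime, h5⟩ := memP p hmem.1
        exact card_sol_le_one hprime h5 hc hb (by push_neg at hmem; omega)
      · simp only [Finset.sum_const, smul_eq_mul, mul_one]
        exact le_rfl
  -- cast to ℚ
  have hQ : (((Finset.range M).filter (fun k => ¬ Squarefree (F k))).card : ℚ)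
      ≤ (∑ p ∈ Ps, ((2*(M/p^2)+2 : ℕ) : ℚ)) + (Pl.card : ℚ) := by
    have := Nat.cast_le (α := ℚ) |>.mpr hNat
    push_cast at this ⊢
    convert this using 2
  -- per-term bound
  have hterm : ∀ p ∈ Ps, ((2*(M/p^2)+2 : ℕ) : ℚ) ≤ 2*(M:ℚ)*(1/(p:ℚ)^2) + 2 := by
    intro p hp
    have h1 : ((M/p^2 : ℕ) : ℚ) ≤ (M:ℚ)/((p:ℚ)^2) := by
      have := Nat.cast_div_le (α := ℚ) (m := M) (n := p^2)
      push_cast at this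
      exact this
    push_cast
    have : 2*(M:ℚ)*(1/(p:ℚ)^2) = 2*((M:ℚ)/(p:ℚ)^2) := by ring
    rw [this]
    linarith
  have hsum1 : (∑ p ∈ Ps, ((2*(M/p^2)+2 : ℕ) : ℚ))
      ≤ 2*(M:ℚ)*(∑ p ∈ Ps, 1/(p:ℚ)^2) + 2*(Ps.card : ℚ) := by
    refine le_trans (Finset.sum_le_sum hterm) ?_
    rw [Finset.sum_add_distrib, Finset.sum_const, ← Finset.mul_sum]
    simp only [nsmul_eq_mul]
    ring_nf
    linarith
  -- sigma bound
  have hnn : ∀ p ∈ P, (0:ℚ) ≤ 1/(p:ℚ)^2 := by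
    intro p _
    positivity
  have hsigma : (∑ p ∈ Ps, 1/(p:ℚ)^2) ≤ 1049/10000 := by
    have hsub : Ps ⊆ P := Finset.filter_subset _ _
    refine le_trans (Finset.sum_le_sum_of_subset_of_nonneg hsub (fun p hp _ => hnn p hp)) ?_
    rw [← Finset.sum_filter_add_sum_filter_not P (fun p => p < 60) (fun p => 1/(p:ℚ)^2)]
    have hfirst : (∑ p ∈ P.filter (fun p => p < 60), 1/(p:ℚ)^2) ≤ 1049/10000 - 1/59 := by
      refine le_trans (Finset.sum_le_sum_of_subset_of_nonneg (small_filter B) ?_) sum_smallPrimes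
      intro p _ _
      positivity
    have hsecond : (∑ p ∈ P.filter (fun p => ¬ p < 60), 1/(p:ℚ)^2) ≤ 1/59 := by
      have hsub2 : P.filter (fun p => ¬ p < 60) ⊆ Finset.Ico 60 B := by
        intro p hp
        simp only [hP, Finset.mem_filter, Finset.mem_range] at hp
        exact Finset.mem_Ico.mpr ⟨by omega, hp.1.1⟩
      refine le_trans (Finset.sum_le_sum_of_subset_of_nonneg hsub2 ?_) ?_
      · intro p _ _
        positivity
      · have h59 := sum_Ico_inv_sq_le 60 B (by norm_num)
        norm_num at h59
        simp only [one_div]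
        convert h59 using 1
        norm_num
        exacts [rfl, by norm_num]
    linarith
  -- card Ps bound
  have hPscard : (Ps.card : ℚ) ≤ (Nat.sqrt T : ℚ) + 1 := by
    have hsub : Ps ⊆ Finset.range (Nat.sqrt T + 1) := by
      intro p hp
      simp only [hPs, Finset.mem_filter] at hp
      have : p ≤ Nat.sqrt T := Nat.le_sqrt.mpr (by rw [← pow_two]; exact hp.2)
      exact Finset.mem_range.mpr (by omega)
    have := Finset.card_le_card hsub
    rw [Finset.card_range] at this
    exact_mod_cast this
  -- card Pl bound
  have hPlcard : (Pl.card : ℚ) ≤ (Nat.primeCounting' B : ℚ) := by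
    have hsub : Pl ⊆ Nat.primesBelow B := by
      intro p hp
      simp only [hPl, hP, Finset.mem_filter, Finset.mem_range] at hp
      exact Nat.mem_primesBelow.mpr ⟨hp.1.1, hp.1.2.1⟩
    have := Finset.card_le_card hsub
    rw [Nat.primesBelow_card_eq_primeCounting'] at this
    exact_mod_cast this
  have hM0 : (0:ℚ) ≤ (M:ℚ) := by positivity
  calc (((Finset.range M).filter (fun k => ¬ Squarefree (F k))).card : ℚ)
      ≤ (∑ p ∈ Ps, ((2*(M/p^2)+2 : ℕ) : ℚ)) + (Pl.card : ℚ) := hQ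
    _ ≤ (2*(M:ℚ)*(∑ p ∈ Ps, 1/(p:ℚ)^2) + 2*(Ps.card : ℚ)) + (Pl.card : ℚ) := by linarith
    _ ≤ 2*(M:ℚ)*(1049/10000) + 2*((Nat.sqrt T : ℚ) + 1) + (Nat.primeCounting' B : ℚ) := by
        have h1 : 2*(M:ℚ)*(∑ p ∈ Ps, 1/(p:ℚ)^2) ≤ 2*(M:ℚ)*(1049/10000) := by
          apply mul_le_mul_of_nonneg_left hsigma (by linarith)
        linarith

lemma sqrt_le_bound (x : ℕ) : Nat.sqrt x ≤ x/10000 + 10000 := by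
  rcases le_or_gt (Nat.sqrt x) 10000 with h | h
  · omega
  · have h1 : 10000 * Nat.sqrt x ≤ Nat.sqrt x * Nat.sqrt x := by
      apply Nat.mul_le_mul_right
      omega
    have h2 : Nat.sqrt x * Nat.sqrt x ≤ x := Nat.sqrt_le x
    have : Nat.sqrt x ≤ x / 10000 := Nat.le_div_iff_mul_le (by norm_num) |>.mpr (by omega)
    omega

lemma final_step {F : ℕ → ℕ} {M N : ℕ}
    (h : (((Finset.range M).filter (fun k => ¬ Squarefree (F k))).card) < M - N) :
    ∃ k, N ≤ k ∧ Squarefree (F k) := by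
  by_contra h'
  push_neg at h'
  have hsub : Finset.Ico N M ⊆ (Finset.range M).filter (fun k => ¬ Squarefree (F k)) := by
    intro k hk
    rw [Finset.mem_Ico] at hk
    rw [Finset.mem_filter, Finset.mem_range]
    exact ⟨hk.2, h' k hk.1⟩
  have := Finset.card_le_card hsub
  rw [Nat.card_Ico] at this
  omega

lemma F2_odd (k : ℕ) : ¬ 2 ∣ (27*k^2+27*k+7) := by
  obtain ⟨m, rfl | rfl⟩ := Nat.even_or_odd' k <;> (ring_nf; omega)

lemma F2_not3 (k : ℕ) : ¬ 3 ∣ (27*k^2+27*k+7) := by omega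

lemma F1_odd (k : ℕ) : ¬ 2 ∣ (9*k^2+3*k+1) := by
  obtain ⟨m, rfl | rfl⟩ := Nat.even_or_odd' k <;> (ring_nf; omega)

lemma F1_not3 (k : ℕ) : ¬ 3 ∣ (9*k^2+3*k+1) := by omega

lemma exists_good2 (N : ℕ) : ∃ k, N ≤ k ∧ Squarefree (27*k^2+27*k+7) := by
  set W : ℕ := 100000000000000000000 with hW
  set M : ℕ := 100*(N + W) with hM
  set B : ℕ := (21*M)/4 + 1 with hB
  have hMW : W ≤ M := by omega
  have hcov : ∀ k, k < M → ∀ p, p * p ∣ (27*k^2+27*k+7) → p < B := by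
    intro k hk p hdvd
    have h1 : p*p ≤ 27*k^2+27*k+7 := Nat.le_of_dvd (by positivity) hdvd
    by_contra hple
    push_neg at hple
    have h4 : 21*M + 1 ≤ 4*p := by clear_value W M B; omega
    have h5 : k + 1 ≤ M := hk
    have h6 : 21*k + 22 ≤ 4*p := by omega
    nlinarith [h1, h6, sq_nonneg k]
  have hmain := main_count (b := 9) (c := 3) (d := 12) (by norm_num) (by norm_num)
    (fun k => 27*k^2+27*k+7) (fun k => by ring) F2_odd F2_not3 M B (by omega) hcov
  -- bound pi'
  have hQB : 614889782588491410 + 1 ≤ B := by omega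
  have hπ : (Nat.primeCounting' B : ℚ)
      ≤ (614889782588491411 : ℚ) + 85287729364992000 * ((B:ℚ) / 614889782588491410 + 1) := by
    have h1 := pi'_le hQB
    have h2 : ((B / 614889782588491410 : ℕ) : ℚ) ≤ (B:ℚ) / 614889782588491410 := by
      exact_mod_cast Nat.cast_div_le (α := ℚ) (m := B) (n := 614889782588491410)
    have h3 := Nat.cast_le (α := ℚ) |>.mpr h1
    push_cast at h3
    linarith
  have hBQ : (B:ℚ) ≤ 21*(M:ℚ)/4 + 1 := by
    have h1 : ((21*M/4 : ℕ) : ℚ) ≤ (21*(M:ℚ))/4 := by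
      have h0 := Nat.cast_div_le (α := ℚ) (m := 21*M) (n := 4)
      rw [Nat.cast_mul] at h0
      exact_mod_cast h0
    rw [hB]; push_cast
    linarith
  have hsq : ((Nat.sqrt (18*M+9) : ℕ) : ℚ) ≤ (18*(M:ℚ)+9)/10000 + 10000 := by
    have h1 := sqrt_le_bound (18*M+9)
    have h2 : (((18*M+9)/10000 : ℕ) : ℚ) ≤ (18*(M:ℚ)+9)/10000 := by
      have h0 := Nat.cast_div_le (α := ℚ) (m := 18*M+9) (n := 10000)
      rw [Nat.cast_add, Nat.cast_mul] at h0
      exact_mod_cast h0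
    have h3 := Nat.cast_le (α := ℚ) |>.mpr h1
    push_cast at h3 ⊢
    linarith
  have hNM : N + 1 ≤ M := by omega
  have hMQ : (M:ℚ) = 100*((N:ℚ) + 100000000000000000000) := by
    rw [hM]; push_cast; ring
  have hN0 : (0:ℚ) ≤ (N:ℚ) := by positivity
  have hlt : (((Finset.range M).filter (fun k => ¬ Squarefree (27*k^2+27*k+7))).card : ℚ)
      < ((M - N : ℕ) : ℚ) := by
    rw [Nat.cast_sub (by omega)]
    linarith
  have hltN : ((Finset.range M).filter (fun k => ¬ Squarefree (27*k^2+27*k+7))).card < M - N := by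
    exact_mod_cast hlt
  exact final_step hltN

lemma exists_good1 (N : ℕ) : ∃ k, N ≤ k ∧ Squarefree (9*k^2+3*k+1) := by
  set W : ℕ := 100000000000000000000 with hW
  set M : ℕ := 100*(N + W) with hM
  set B : ℕ := 3*M + 1 with hB
  have hcov : ∀ k, k < M → ∀ p, p * p ∣ (9*k^2+3*k+1) → p < B := by
    intro k hk p hdvd
    have h1 : p*p ≤ 9*k^2+3*k+1 := Nat.le_of_dvd (by positivity) hdvd
    by_contra hple
    push_neg at hple
    have h6 : 3*k + 4 ≤ p := by omega
    nlinarith [h1, h6, sq_nonneg k]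
  have hmain := main_count (b := 3) (c := 27) (d := 36) (by norm_num) (by norm_num)
    (fun k => 9*k^2+3*k+1) (fun k => by ring) F1_odd F1_not3 M B (by omega) hcov
  have hQB : 614889782588491410 + 1 ≤ B := by omega
  have hπ : (Nat.primeCounting' B : ℚ)
      ≤ (614889782588491411 : ℚ) + 85287729364992000 * ((B:ℚ) / 614889782588491410 + 1) := by
    have h1 := pi'_le hQB
    have h2 : ((B / 614889782588491410 : ℕ) : ℚ) ≤ (B:ℚ) / 614889782588491410 := by
      exact_mod_cast Nat.cast_div_le (α := ℚ) (m := B) (n := 614889782588491410)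
    have h3 := Nat.cast_le (α := ℚ) |>.mpr h1
    push_cast at h3
    linarith
  have hBQ : (B:ℚ) = 3*(M:ℚ) + 1 := by rw [hB]; push_cast; ring
  have hsq : ((Nat.sqrt (18*M+3) : ℕ) : ℚ) ≤ (18*(M:ℚ)+3)/10000 + 10000 := by
    have h1 := sqrt_le_bound (18*M+3)
    have h2 : (((18*M+3)/10000 : ℕ) : ℚ) ≤ (18*(M:ℚ)+3)/10000 := by
      have h0 := Nat.cast_div_le (α := ℚ) (m := 18*M+3) (n := 10000)
      rw [Nat.cast_add, Nat.cast_mul] at h0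
      exact_mod_cast h0
    have h3 := Nat.cast_le (α := ℚ) |>.mpr h1
    push_cast at h3 ⊢
    linarith
  have hMQ : (M:ℚ) = 100*((N:ℚ) + 100000000000000000000) := by
    rw [hM]; push_cast; ring
  have hN0 : (0:ℚ) ≤ (N:ℚ) := by positivity
  have hlt : (((Finset.range M).filter (fun k => ¬ Squarefree (9*k^2+3*k+1))).card : ℚ)
      < ((M - N : ℕ) : ℚ) := by
    rw [Nat.cast_sub (by omega)]
    linarith
  have hltN : ((Finset.range M).filter (fun k => ¬ Squarefree (9*k^2+3*k+1))).card < M - N := by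
    exact_mod_cast hlt
  exact final_step hltN

theorem infinitely_many_squarefree_values :
    {k : ℤ | Squarefree (9 * k ^ 2 + 3 * k + 1)}.Infinite ∧
    {k : ℤ | 0 ≤ k ∧ Squarefree (27 * k ^ 2 + 27 * k + 7)}.Infinite := by
  constructor
  · set S : Set ℤ := {k : ℤ | Squarefree (9 * k ^ 2 + 3 * k + 1)} with hS
    have key : ∀ x : ℤ, ∃ y ∈ S, x < y := by
      intro x
      obtain ⟨k, hk, hsf⟩ := exists_good1 (x.toNat + 1)
      refine ⟨(k:ℤ), ?_, by omega⟩
      have he : (9 * (k:ℤ) ^ 2 + 3 * (k:ℤ) + 1) = ((9*k^2+3*k+1 : ℕ) : ℤ) := by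
        push_cast; ring
      simp only [hS, Set.mem_setOf_eq, he]
      exact Int.squarefree_natCast.mpr hsf
    intro hfin
    obtain ⟨x, hx⟩ := hfin.bddAbove
    obtain ⟨y, hyS, hxy⟩ := key x
    exact absurd (hx hyS) (by omega)
  · set S : Set ℤ := {k : ℤ | 0 ≤ k ∧ Squarefree (27 * k ^ 2 + 27 * k + 7)} with hS
    have key : ∀ x : ℤ, ∃ y ∈ S, x < y := by
      intro x
      obtain ⟨k, hk, hsf⟩ := exists_good2 (x.toNat + 1)
      refine ⟨(k:ℤ), ?_, by omega⟩
      have he : (27 * (k:ℤ) ^ 2 + 27 * (k:ℤ) + 7) = ((27*k^2+27*k+7 : ℕ) : ℤ) := by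
        push_cast; ring
      simp only [hS, Set.mem_setOf_eq, he]
      exact ⟨by positivity, Int.squarefree_natCast.mpr hsf⟩
    intro hfin
    obtain ⟨x, hx⟩ := hfin.bddAbove
    obtain ⟨y, hyS, hxy⟩ := key x
    exact absurd (hx hyS) (by omega)
end

section
/- Let α be a root of x^3 - 3x + 1. Then x^3 + 3x^2 - 3 = (x + α + 1)(x + α^2 - 1)(x - α^2 - α + 3) in Q(α)[x]; in particular the splitting field of x^3 + 3x^2 - 3 equals Q(α). -/
open Polynomial

theorem factorization_x3_3x2_sub3 (K : Type) [Field K] [Algebra ℚ K] (α : K)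
    (hα : α ^ 3 - 3 * α + 1 = 0) :
    (X ^ 3 + 3 * X ^ 2 - 3 : Polynomial K)
      = (X + C (α + 1)) * (X + C (α ^ 2 - 1)) * (X - C (α ^ 2 + α - 3)) ∧
    IntermediateField.adjoin ℚ ((X ^ 3 + 3 * X ^ 2 - 3 : Polynomial ℚ).rootSet K)
      = IntermediateField.adjoin ℚ ({α} : Set K) := by
  have hC : (C α : Polynomial K) ^ 3 - 3 * C α + 1 = 0 := by
    have := congrArg C hα
    push_cast at this
    rw [← map_ofNat C 3]
    simpa using this
  have hfac : (X ^ 3 + 3 * X ^ 2 - 3 : Polynomial K)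
      = (X + C (α + 1)) * (X + C (α ^ 2 - 1)) * (X - C (α ^ 2 + α - 3)) := by
    have h2 : (C (α + 1) : Polynomial K) = C α + 1 := by
      simp [map_add, map_one]
    have h3 : (C (α ^ 2 - 1) : Polynomial K) = C α ^ 2 - 1 := by
      simp [map_sub, map_pow, map_one]
    have h4 : (C (α ^ 2 + α - 3) : Polynomial K) = C α ^ 2 + C α - 3 := by
      simp [map_add, map_sub, map_pow, map_ofNat]
    rw [h2, h3, h4]
    linear_combination ((C α + 1) * X + C α * (C α + 2)) * hC
  refine ⟨hfac, ?_⟩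
  have hp : (X ^ 3 + 3 * X ^ 2 - 3 : Polynomial ℚ) ≠ 0 := by
    intro h
    have := congrArg (fun q => Polynomial.coeff q 3) h
    simp at this
  have hmap : (X ^ 3 + 3 * X ^ 2 - 3 : Polynomial ℚ).map (algebraMap ℚ K)
      = (X ^ 3 + 3 * X ^ 2 - 3 : Polynomial K) := by
    push_cast [Polynomial.map_sub, Polynomial.map_add, Polynomial.map_pow,
      Polynomial.map_mul, Polynomial.map_ofNat]
    simp
  apply le_antisymm
  · rw [IntermediateField.adjoin_le_iff]
    intro x hx
    have hαmem : α ∈ IntermediateField.adjoin ℚ ({α} : Set K) :=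
      IntermediateField.subset_adjoin ℚ _ rfl
    rw [Polynomial.mem_rootSet] at hx
    have hev : x ^ 3 + 3 * x ^ 2 - 3 = 0 := by
      have := hx.2
      rw [Polynomial.aeval_def, ← Polynomial.eval_map, hmap] at this
      simpa using this
    have := congrArg (fun q => Polynomial.eval x q) hfac
    simp only [Polynomial.eval_mul, Polynomial.eval_add, Polynomial.eval_sub,
      Polynomial.eval_pow, Polynomial.eval_X, Polynomial.eval_C, Polynomial.eval_ofNat] at this
    rw [hev] at this
    rcases mul_eq_zero.mp this.symm with h | h
    · rcases mul_eq_zero.mp h with h | h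
      · have hx' : x = -(α + 1) := by linear_combination h
        rw [hx']
        exact neg_mem (add_mem hαmem (one_mem _))
      · have hx' : x = -(α ^ 2 - 1) := eq_neg_of_add_eq_zero_left h
        rw [hx']
        exact neg_mem (sub_mem (pow_mem hαmem 2) (one_mem _))
    · have hx' : x = α ^ 2 + α - 3 := by linear_combination h
      rw [hx']
      refine sub_mem (add_mem (pow_mem hαmem 2) hαmem) ?_
      simpa using (IntermediateField.adjoin ℚ ({α} : Set K)).algebraMap_mem (3 : ℚ)
  · rw [IntermediateField.adjoin_le_iff]
    intro x hx
    rw [Set.mem_singleton_iff] at hx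
    rw [hx]
    have hroot : -(α + 1) ∈ (X ^ 3 + 3 * X ^ 2 - 3 : Polynomial ℚ).rootSet K := by
      rw [Polynomial.mem_rootSet]
      refine ⟨hp, ?_⟩
      rw [Polynomial.aeval_def, ← Polynomial.eval_map, hmap]
      simp only [Polynomial.eval_sub, Polynomial.eval_add, Polynomial.eval_pow,
        Polynomial.eval_mul, Polynomial.eval_X, Polynomial.eval_ofNat]
      linear_combination -hα
    have hmem : -(α + 1) ∈ IntermediateField.adjoin ℚ
        ((X ^ 3 + 3 * X ^ 2 - 3 : Polynomial ℚ).rootSet K) :=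
      IntermediateField.subset_adjoin ℚ _ hroot
    have : α = -(-(α + 1)) - 1 := by ring
    rw [this]
    exact sub_mem (neg_mem hmem) (one_mem _)
end
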